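/- arXiv:2310.14721 — 5 statements merged into one kernel-verified Lean document; each statement's English description precedes it below -/
import Mathlib

section
/- Let x ∈ ℝ be fixed with P a polynomial such that f(x) is a simple root of y ↦ P(x,y), and define y_sup = min{y : P(x,y)=0, y > f(x)} (or +∞ if empty) and y_inf = max{y : P(x,y)=0, y < f(x)} (or -∞ if empty). Then the interval (y_inf, y_sup) is nonempty, and for the ODE dy/dt = σ·P(x,y) with σ chosen so that σ·P(x,y) < 0 for y slightly above f(x), every solution with initial value in (y_inf, y_sup) converges to f(x). -/
open Filter Set Polynomial


lemma barrier_up (g y : ℝ → ℝ) (hy : ∀ t, HasDerivAt y (g (y t)) t)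
    (a z : ℝ) (haz : a < z) (hsign : ∀ w, a < w → w < z → g w < 0)
    (t0 t1 : ℝ) (h01 : t0 ≤ t1) (h0 : y t0 < z) : y t1 < z := by
  have hyc : Continuous y := by
    apply continuous_iff_continuousAt.2 fun t => (hy t).continuousAt
  by_contra hcon
  push_neg at hcon
  have ht01 : t0 < t1 := by
    rcases eq_or_lt_of_le h01 with h | h
    · rw [h] at h0; linarith
    · exact h
  set B : Set ℝ := Icc t0 t1 ∩ y ⁻¹' Ici z with hB
  have hBc : IsClosed B := isClosed_Icc.inter (isClosed_Ici.preimage hyc)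
  have hBne : B.Nonempty := ⟨t1, ⟨h01, le_refl _⟩, hcon⟩
  have hBbdd : BddBelow B := ⟨t0, fun t ht => ht.1.1⟩
  set ts := sInf B with hts
  have htsB : ts ∈ B := hBc.csInf_mem hBne hBbdd
  have hts0 : t0 < ts := by
    rcases eq_or_lt_of_le htsB.1.1 with h | h
    · exfalso; have := htsB.2; rw [← h] at this; exact absurd this (not_le.2 h0)
    · exact h
  have hlt : ∀ t, t0 ≤ t → t < ts → y t < z := by
    intro t ht0 htts
    by_contra hc
    push_neg at hc
    have : t ∈ B := ⟨⟨ht0, le_trans (le_of_lt htts) htsB.1.2⟩, hc⟩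
    exact absurd (csInf_le hBbdd this) (not_le.2 htts)
  have hyts : y ts = z := by
    refine le_antisymm ?_ htsB.2
    have h1 : Tendsto y (nhdsWithin ts (Iio ts)) (nhds (y ts)) :=
      (hyc.tendsto ts).mono_left nhdsWithin_le_nhds
    refine le_of_tendsto h1 ?_
    filter_upwards [Ioo_mem_nhdsLT_of_mem ⟨hts0, le_refl ts⟩] with t ht
    exact le_of_lt (hlt t (le_of_lt ht.1) ht.2)
  -- find s ∈ [t0, ts) with a < y t on [s, ts]
  have hev : ∀ᶠ t in nhds ts, a < y t := by
    have : Ioi a ∈ nhds (y ts) := isOpen_Ioi.mem_nhds (by rw [hyts]; exact haz)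
    exact (hyc.tendsto ts) this
  rcases Metric.eventually_nhds_iff.1 hev with ⟨ε, hε, hball⟩
  set s := max t0 (ts - ε / 2) with hs
  have hsts : s < ts := by
    apply max_lt hts0; linarith
  have hsge : t0 ≤ s := le_max_left _ _
  have hguard : ∀ t ∈ Icc s ts, a < y t := by
    intro t ht
    apply hball
    rw [Real.dist_eq, abs_lt]
    constructor
    · have : ts - ε / 2 ≤ s := le_max_right _ _
      have := ht.1
      linarith
    · have := ht.2; linarith
  have hanti : StrictAntiOn y (Icc s ts) := by
    apply strictAntiOn_of_deriv_neg (convex_Icc _ _) hyc.continuousOn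
    intro x hx
    rw [interior_Icc] at hx
    rw [(hy x).deriv]
    exact hsign _ (hguard x ⟨le_of_lt hx.1, le_of_lt hx.2⟩)
      (hlt x (le_trans hsge (le_of_lt hx.1)) hx.2)
  have h1 : y ts < y s := hanti ⟨le_refl s, le_of_lt hsts⟩ ⟨le_of_lt hsts, le_refl ts⟩ hsts
  have h2 : y s < z := hlt s hsge hsts
  rw [hyts] at h1
  linarith

lemma barrier_down (g y : ℝ → ℝ) (hy : ∀ t, HasDerivAt y (g (y t)) t)
    (z a : ℝ) (hza : z < a) (hsign : ∀ w, z < w → w < a → 0 < g w)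
    (t0 t1 : ℝ) (h01 : t0 ≤ t1) (h0 : z < y t0) : z < y t1 := by
  have := barrier_up (fun w => -g (-w)) (fun t => -(y t))
    (fun t => by simpa using (hy t).fun_neg)
    (-a) (-z) (by linarith)
    (fun w hw1 hw2 => by simpa using neg_neg_iff_pos.2 (hsign (-w) (by linarith) (by linarith)))
    t0 t1 h01 (by simpa using h0)
  simp at this
  linarith


lemma aux_conv (g : ℝ → ℝ) (hg : Continuous g) (r b : ℝ) (hrb : r ≤ b) (hgr : g r = 0)
    (hsign : ∀ w, r < w → w ≤ b → g w < 0)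
    (y : ℝ → ℝ) (hy : ∀ t, HasDerivAt y (g (y t)) t)
    (hmem : ∀ t, 0 ≤ t → y t ∈ Set.Icc r b) :
    Tendsto y atTop (nhds r) := by
  have hyc : Continuous y := continuous_iff_continuousAt.2 fun t => (hy t).continuousAt
  have hderiv : ∀ t, 0 ≤ t → g (y t) ≤ 0 := by
    intro t ht
    rcases eq_or_lt_of_le (hmem t ht).1 with h | h
    · rw [← h, hgr]
    · exact le_of_lt (hsign _ h (hmem t ht).2)
  have hanti : AntitoneOn y (Ici 0) := by
    apply antitoneOn_of_deriv_nonpos (convex_Ici _) hyc.continuousOn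
    · intro x hx; exact (hy x).differentiableAt.differentiableWithinAt
    · intro x hx
      rw [interior_Ici] at hx
      rw [(hy x).deriv]
      exact hderiv x (le_of_lt hx)
  set Y : ℝ → ℝ := fun t => y (max t 0) with hY
  have hYanti : Antitone Y := by
    intro s t hst
    exact hanti (le_max_right s 0) (le_max_right t 0) (max_le_max hst (le_refl 0))
  have hYbdd : BddBelow (range Y) := by
    refine ⟨r, ?_⟩
    rintro w ⟨t, rfl⟩
    exact (hmem _ (le_max_right t 0)).1
  have hYtendsto : Tendsto Y atTop (nhds (⨅ t, Y t)) := tendsto_atTop_ciInf hYanti hYbdd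
  set L := ⨅ t, Y t with hL
  have hyY : y =ᶠ[atTop] Y := by
    filter_upwards [eventually_ge_atTop (0 : ℝ)] with t ht
    simp [hY, max_eq_left ht]
  have hytendsto : Tendsto y atTop (nhds L) := hYtendsto.congr' hyY.symm
  have hLr : r ≤ L := le_ciInf fun t => (hmem _ (le_max_right t 0)).1
  have hLy : ∀ t, 0 ≤ t → L ≤ y t := by
    intro t ht
    have h1 := ciInf_le hYbdd t
    have h2 : Y t = y t := by simp [hY, max_eq_left ht]
    rw [h2] at h1
    exact h1
  rcases eq_or_lt_of_le hLr with h | h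
  · rwa [← h] at hytendsto
  · exfalso
    have hLb : L ≤ b := le_trans (hLy 0 (le_refl 0)) (hmem 0 (le_refl 0)).2
    obtain ⟨w0, hw0K, hw0max'⟩ := (isCompact_Icc (a := L) (b := b)).exists_isMaxOn
      ⟨L, le_refl L, hLb⟩ hg.continuousOn
    have hw0max : ∀ w ∈ Icc L b, g w ≤ g w0 := hw0max'
    have hgw0 : g w0 < 0 := hsign w0 (lt_of_lt_of_le h hw0K.1) hw0K.2
    set c := -g w0 with hc
    have hcpos : 0 < c := by simp [hc]; linarith
    set u : ℝ → ℝ := fun t => y t + c * t with hu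
    have huanti : AntitoneOn u (Ici 0) := by
      apply antitoneOn_of_deriv_nonpos (convex_Ici _)
      · exact (hyc.add (continuous_const.mul continuous_id)).continuousOn
      · intro x hx
        exact (((hy x).add ((hasDerivAt_id x).const_mul c)).differentiableAt).differentiableWithinAt
      · intro x hx
        rw [interior_Ici] at hx
        have hd : HasDerivAt u (g (y x) + c * 1) x := (hy x).add ((hasDerivAt_id x).const_mul c)
        rw [hd.deriv]
        have : g (y x) ≤ g w0 := hw0max _ ⟨hLy x (le_of_lt hx), (hmem x (le_of_lt hx)).2⟩
        simp [hc] at this ⊢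
        linarith
    have hdiv : (0:ℝ) ≤ (b - r) / c := div_nonneg (by linarith) (le_of_lt hcpos)
    have hT0 : (0:ℝ) ≤ (b - r) / c + 1 := by linarith
    have h1 : u ((b - r) / c + 1) ≤ u 0 := huanti (Set.mem_Ici.2 (le_refl 0)) hT0 hT0
    have h2 : y ((b - r) / c + 1) + c * ((b - r) / c + 1) ≤ y 0 := by simpa [hu] using h1
    have h3 : r ≤ y ((b - r) / c + 1) := (hmem _ hT0).1
    have h4 : y 0 ≤ b := (hmem 0 (le_refl 0)).2
    have h5 : c * ((b - r) / c + 1) = (b - r) + c := by field_simp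
    linarith


variable {p : Polynomial ℝ} {r σ : ℝ}

lemma sigma_ne (hσ : ∃ δ > 0, ∀ y ∈ Set.Ioo r (r + δ), σ * p.eval y < 0) : σ ≠ 0 := by
  obtain ⟨δ, hδ, h⟩ := hσ
  intro hσ0
  have := h (r + δ/2) ⟨by linarith, by linarith⟩
  rw [hσ0] at this
  simp at this

lemma Splus (hσ : ∃ δ > 0, ∀ y ∈ Set.Ioo r (r + δ), σ * p.eval y < 0) :
    ∀ w, r < w → (∀ z, p.eval z = 0 → r < z → w < z) → σ * p.eval w < 0 := by
  obtain ⟨δ, hδ, h⟩ := hσ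
  have hσne : σ ≠ 0 := sigma_ne ⟨δ, hδ, h⟩
  intro w hrw hz
  have hpw : p.eval w ≠ 0 := fun h0 => absurd (hz w h0 hrw) (lt_irrefl w)
  rcases lt_or_gt_of_ne (mul_ne_zero hσne hpw) with h' | h'
  · exact h'
  · exfalso
    set v := (r + min w (r + δ)) / 2 with hv
    have hrv : r < v := by
      have h1 : r < min w (r + δ) := lt_min hrw (by linarith)
      rw [hv]; linarith
    have hvw : v < w := by
      have h1 : min w (r + δ) ≤ w := min_le_left _ _
      rw [hv]; linarith
    have hvδ : v < r + δ := by
      have h1 : min w (r + δ) ≤ r + δ := min_le_right _ _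
      rw [hv]; linarith
    have hgv : σ * p.eval v < 0 := h v ⟨hrv, hvδ⟩
    have hcont : ContinuousOn (fun u => σ * p.eval u) (Icc v w) :=
      (continuous_const.mul p.continuous_aeval).continuousOn
    have hIVT := intermediate_value_Icc (le_of_lt hvw) hcont
    have h0mem : (0:ℝ) ∈ Icc (σ * p.eval v) (σ * p.eval w) := ⟨le_of_lt hgv, le_of_lt h'⟩
    obtain ⟨u, huI, hu⟩ := hIVT h0mem
    have hpu : p.eval u = 0 := by
      rcases mul_eq_zero.1 hu with h0 | h0
      · exact absurd h0 hσne
      · exact h0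
    have : w < u := hz u hpu (lt_of_lt_of_le hrv huI.1)
    linarith [huI.2]

lemma below_pos (hroot : p.eval r = 0) (hsimple : p.derivative.eval r ≠ 0)
    (hσ : ∃ δ > 0, ∀ y ∈ Set.Ioo r (r + δ), σ * p.eval y < 0) :
    ∃ δ' > 0, ∀ v, r - δ' < v → v < r → 0 < σ * p.eval v := by
  obtain ⟨δ, hδ, h⟩ := hσ
  have hσne : σ ≠ 0 := sigma_ne ⟨δ, hδ, h⟩
  set g : ℝ → ℝ := fun u => σ * p.eval u with hg
  have hgr : g r = 0 := by rw [hg]; simp [hroot]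
  have hd : HasDerivAt g (σ * p.derivative.eval r) r := (p.hasDerivAt r).const_mul σ
  have hslope : Tendsto (slope g r) (nhdsWithin r {r}ᶜ) (nhds (σ * p.derivative.eval r)) :=
    hasDerivAt_iff_tendsto_slope.1 hd
  have hne : σ * p.derivative.eval r ≠ 0 := mul_ne_zero hσne hsimple
  have hle : σ * p.derivative.eval r ≤ 0 := by
    have h1 : Tendsto (slope g r) (nhdsWithin r (Ioi r)) (nhds (σ * p.derivative.eval r)) :=
      hslope.mono_left (nhdsWithin_mono r fun x hx => ne_of_gt hx)
    refine le_of_tendsto h1 ?_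
    filter_upwards [Ioo_mem_nhdsGT_of_mem (show r ∈ Ico r (r + δ) from ⟨le_refl r, by linarith⟩)] with v hv
    have hgv : g v < 0 := h v hv
    have : slope g r v = g v / (v - r) := by
      rw [slope_def_field, hgr]; ring_nf
    rw [this]
    apply le_of_lt (div_neg_of_neg_of_pos hgv (by linarith [hv.1]))
  have hlt : σ * p.derivative.eval r < 0 := lt_of_le_of_ne hle hne
  have h2 : Tendsto (slope g r) (nhdsWithin r (Iio r)) (nhds (σ * p.derivative.eval r)) :=
    hslope.mono_left (nhdsWithin_mono r fun x hx => ne_of_lt hx)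
  have hev : ∀ᶠ v in nhdsWithin r (Iio r), 0 < g v := by
    filter_upwards [h2.eventually (eventually_lt_nhds hlt), self_mem_nhdsWithin] with v hv hv'
    have hslv : slope g r v = g v / (v - r) := by rw [slope_def_field, hgr]; ring_nf
    rw [hslv] at hv
    have hvr : v - r < 0 := by simp at hv'; linarith
    by_contra hc
    push_neg at hc
    have : 0 ≤ g v / (v - r) := div_nonneg_of_nonpos hc (le_of_lt hvr)
    linarith
  obtain ⟨l, hl, hsub⟩ := mem_nhdsLT_iff_exists_Ioo_subset.1 hev
  refine ⟨r - l, by simp at hl; linarith, fun v h1 h2 => ?_⟩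
  exact hsub ⟨by linarith, h2⟩

lemma Sminus (hroot : p.eval r = 0) (hsimple : p.derivative.eval r ≠ 0)
    (hσ : ∃ δ > 0, ∀ y ∈ Set.Ioo r (r + δ), σ * p.eval y < 0) :
    ∀ w, w < r → (∀ z, p.eval z = 0 → z < r → z < w) → 0 < σ * p.eval w := by
  obtain ⟨δ', hδ', h'⟩ := below_pos hroot hsimple hσ
  have hσne : σ ≠ 0 := sigma_ne hσ
  intro w hwr hz
  have hpw : p.eval w ≠ 0 := fun h0 => absurd (hz w h0 hwr) (lt_irrefl w)
  rcases lt_or_gt_of_ne (mul_ne_zero hσne hpw) with hlt | hlt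
  swap
  · exact hlt
  exfalso
  set v := (max w (r - δ') + r) / 2 with hv
  have hv1 : w < v := by
    have h1 : w ≤ max w (r - δ') := le_max_left _ _
    rw [hv]; linarith
  have hv2 : v < r := by
    have h1 : max w (r - δ') < r := max_lt hwr (by linarith)
    rw [hv]; linarith
  have hv3 : r - δ' < v := by
    have h1 : r - δ' ≤ max w (r - δ') := le_max_right _ _
    rw [hv]; linarith
  have hgv : 0 < σ * p.eval v := h' v hv3 hv2
  have hcont : ContinuousOn (fun u => σ * p.eval u) (Icc w v) :=
    (continuous_const.mul p.continuous_aeval).continuousOn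
  have hIVT := intermediate_value_Icc (le_of_lt hv1) hcont
  obtain ⟨u, huI, hu⟩ := hIVT ⟨le_of_lt hlt, le_of_lt hgv⟩
  have hpu : p.eval u = 0 := by
    rcases mul_eq_zero.1 hu with h0 | h0
    · exact absurd h0 hσne
    · exact h0
  have : u < w := hz u hpu (lt_of_le_of_lt huI.2 hv2)
  linarith [huI.1]

lemma field_ge (g : ℝ → ℝ) (hg : Continuous g) (r : ℝ) (hgr : g r = 0)
    (hfin : {x | g x = 0}.Finite)
    (Sp : ∀ w, r < w → (∀ z, g z = 0 → r < z → w < z) → g w < 0)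
    (Sm : ∀ w, w < r → (∀ z, g z = 0 → z < r → z < w) → 0 < g w)
    (y : ℝ → ℝ) (hy : ∀ t, HasDerivAt y (g (y t)) t)
    (hy0ge : r ≤ y 0)
    (hup : ∀ z, g z = 0 → r < z → y 0 < z) :
    Tendsto y atTop (nhds r) := by
  -- upper guard
  obtain ⟨b0, hb0y, hb0r, hb0sign⟩ :
      ∃ b0, y 0 < b0 ∧ r < b0 ∧ ∀ w, r < w → w ≤ b0 → g w < 0 := by
    set Zp := {z | g z = 0 ∧ r < z} with hZp
    by_cases hne : Zp.Nonempty
    · obtain ⟨zs, hzsmem, hzsmin⟩ :=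
        Set.exists_min_image Zp id (hfin.subset fun z hz => hz.1) hne
      have hy0zs : y 0 < zs := hup zs hzsmem.1 hzsmem.2
      have hrzs : r < zs := hzsmem.2
      refine ⟨(max r (y 0) + zs) / 2, ?_, ?_, ?_⟩
      · have := le_max_right r (y 0); have := max_lt hrzs hy0zs; linarith
      · have := le_max_left r (y 0); have := max_lt hrzs hy0zs; linarith
      · intro w hw1 hw2
        apply Sp w hw1
        intro z hz1 hz2
        have hzzs : zs ≤ z := hzsmin z ⟨hz1, hz2⟩
        have := max_lt hrzs hy0zs
        calc w ≤ (max r (y 0) + zs) / 2 := hw2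
          _ < zs := by linarith
          _ ≤ z := hzzs
    · refine ⟨max r (y 0) + 1, ?_, ?_, ?_⟩
      · have := le_max_right r (y 0); linarith
      · have := le_max_left r (y 0); linarith
      · intro w hw1 _
        apply Sp w hw1
        intro z hz1 hz2
        exact absurd ⟨hz1, hz2⟩ (fun hmem => hne ⟨z, hmem⟩)
  -- lower guard
  obtain ⟨a0, ha0r, ha0sign⟩ : ∃ a0, a0 < r ∧ ∀ w, a0 < w → w < r → 0 < g w := by
    set Zm := {z | g z = 0 ∧ z < r} with hZm
    by_cases hne : Zm.Nonempty
    · obtain ⟨zm, hzmmem, hzmmax⟩ :=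
        Set.exists_max_image Zm id (hfin.subset fun z hz => hz.1) hne
      refine ⟨(zm + r) / 2, by have := hzmmem.2; linarith, ?_⟩
      intro w hw1 hw2
      apply Sm w hw2
      intro z hz1 hz2
      have hA := hzmmax z ⟨hz1, hz2⟩
      have hB := hzmmem.2
      calc (z:ℝ) ≤ zm := hA
        _ < (zm + r)/2 := by linarith
        _ < w := hw1
    · refine ⟨r - 1, by linarith, ?_⟩
      intro w hw1 hw2
      apply Sm w hw2
      intro z hz1 hz2
      exact absurd ⟨z, hz1, hz2⟩ hne
  -- bounds
  have hub : ∀ t, 0 ≤ t → y t < b0 := fun t ht =>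
    barrier_up g y hy r b0 hb0r (fun w h1 h2 => hb0sign w h1 (le_of_lt h2)) 0 t ht hb0y
  have hlb : ∀ t, 0 ≤ t → r ≤ y t := by
    intro t ht
    by_contra hc
    push_neg at hc
    set η := min (r - y t) ((r - a0) / 2) with hη
    have hη1 : 0 < η := lt_min (by linarith) (by linarith)
    have hη2 : η ≤ r - y t := min_le_left _ _
    have hη3 : η ≤ (r - a0) / 2 := min_le_right _ _
    have hbar := barrier_down g y hy (r - η) r (by linarith)
      (fun w hw1 hw2 => ha0sign w (by linarith) hw2) 0 t ht (by linarith)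
    linarith
  exact aux_conv g hg r b0 (le_of_lt hb0r) hgr hb0sign y hy
    fun t ht => ⟨hlb t ht, le_of_lt (hub t ht)⟩

lemma field_conv (g : ℝ → ℝ) (hg : Continuous g) (r : ℝ) (hgr : g r = 0)
    (hfin : {x | g x = 0}.Finite)
    (Sp : ∀ w, r < w → (∀ z, g z = 0 → r < z → w < z) → g w < 0)
    (Sm : ∀ w, w < r → (∀ z, g z = 0 → z < r → z < w) → 0 < g w)
    (y : ℝ → ℝ) (hy : ∀ t, HasDerivAt y (g (y t)) t)
    (hup : ∀ z, g z = 0 → r < z → y 0 < z)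
    (hdown : ∀ z, g z = 0 → z < r → z < y 0) :
    Tendsto y atTop (nhds r) := by
  rcases le_or_gt r (y 0) with h0 | h0
  · exact field_ge g hg r hgr hfin Sp Sm y hy h0 hup
  · -- reflect
    set G : ℝ → ℝ := fun w => -g (2 * r - w) with hG
    set Y : ℝ → ℝ := fun t => 2 * r - y t with hYdef
    have hYd : ∀ t, HasDerivAt Y (G (Y t)) t := by
      intro t
      have h1 : HasDerivAt Y (-(g (y t))) t := by
        have := ((hy t).neg.const_add (2 * r))
        simpa [hYdef, sub_eq_add_neg] using this
      have h2 : G (Y t) = -(g (y t)) := by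
        rw [hG, hYdef]; ring_nf
      rw [h2]
      exact h1
    have hGr : G r = 0 := by
      show -g (2 * r - r) = 0
      have h2 : 2 * r - r = r := by ring
      rw [h2, hgr, neg_zero]
    have hGfin : {x | G x = 0}.Finite := by
      have hsub : {x | G x = 0} ⊆ (fun x => 2 * r - x) '' {x | g x = 0} := by
        intro x hx
        refine ⟨2 * r - x, ?_, by ring⟩
        simp only [mem_setOf_eq, hG] at hx ⊢
        linarith [neg_eq_zero.1 hx]
      exact (hfin.image _).subset hsub
    have hSp : ∀ w, r < w → (∀ z, G z = 0 → r < z → w < z) → G w < 0 := by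
      intro w hw hz
      rw [hG]
      simp only [neg_neg, neg_lt, neg_zero]
      apply Sm (2 * r - w) (by linarith)
      intro z hz1 hz2
      have : w < 2 * r - z := hz (2 * r - z) (by rw [hG]; simp only [neg_eq_zero]; convert hz1 using 2; ring) (by linarith)
      linarith
    have hSm : ∀ w, w < r → (∀ z, G z = 0 → z < r → z < w) → 0 < G w := by
      intro w hw hz
      rw [hG]
      simp only [neg_pos]
      apply Sp (2 * r - w) (by linarith)
      intro z hz1 hz2
      have : 2 * r - z < w := hz (2 * r - z) (by rw [hG]; simp only [neg_eq_zero]; convert hz1 using 2; ring) (by linarith)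
      linarith
    have hY0 : r ≤ Y 0 := by rw [hYdef]; simp; linarith
    have hYup : ∀ z, G z = 0 → r < z → Y 0 < z := by
      intro z hz1 hz2
      have hgz : g (2 * r - z) = 0 := by
        rw [hG] at hz1; simpa using hz1
      have := hdown (2 * r - z) hgz (by linarith)
      rw [hYdef]; simp; linarith
    have hres := field_ge G (by rw [hG]; exact (hg.comp (continuous_const.sub continuous_id)).neg)
      r hGr hGfin hSp hSm Y hYd hY0 hYup
    have : y = fun t => 2 * r - Y t := by
      funext t; rw [hYdef]; ring
    rw [this]
    have hconv := (tendsto_const_nhds (x := 2 * r) (f := atTop)).sub hres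
    convert hconv using 2
    ring


theorem stmt_4 (p : Polynomial ℝ) (r : ℝ)
    (hroot : p.eval r = 0) (hsimple : p.derivative.eval r ≠ 0)
    (σ : ℝ)
    (hσ : ∃ δ > 0, ∀ y ∈ Set.Ioo r (r + δ), σ * p.eval y < 0)
    (J : Set ℝ)
    (hJ : J = {y | (∀ z, p.eval z = 0 → r < z → y < z) ∧
                   (∀ z, p.eval z = 0 → z < r → z < y)}) :
    r ∈ J ∧ J ∈ nhds r ∧
    ∀ y : ℝ → ℝ, (∀ t, HasDerivAt y (σ * p.eval (y t)) t) →
      y 0 ∈ J → Tendsto y atTop (nhds r) := by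
  have hp0 : p ≠ 0 := by
    intro h
    rw [h] at hsimple
    simp at hsimple
  have hσne : σ ≠ 0 := sigma_ne hσ
  have hfinroots : {x : ℝ | p.eval x = 0}.Finite := p.finite_setOf_isRoot hp0
  have hrJ : r ∈ J := by rw [hJ]; exact ⟨fun z _ hz => hz, fun z _ hz => hz⟩
  have hgzero : ∀ z : ℝ, σ * p.eval z = 0 ↔ p.eval z = 0 := by
    intro z
    constructor
    · intro h
      rcases mul_eq_zero.1 h with h0 | h0
      · exact absurd h0 hσne
      · exact h0
    · intro h; rw [h, mul_zero]
  refine ⟨hrJ, ?_, ?_⟩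
  · have hopen : IsOpen J := by
      rw [hJ]
      have heq : {y : ℝ | (∀ z, p.eval z = 0 → r < z → y < z) ∧
                   (∀ z, p.eval z = 0 → z < r → z < y)} =
          (⋂ z ∈ {z : ℝ | p.eval z = 0 ∧ r < z}, Iio z) ∩
          (⋂ z ∈ {z : ℝ | p.eval z = 0 ∧ z < r}, Ioi z) := by
        ext w
        simp only [mem_setOf_eq, mem_inter_iff, mem_iInter, mem_Iio, mem_Ioi]
        constructor
        · rintro ⟨h1, h2⟩
          exact ⟨fun z hz => h1 z hz.1 hz.2, fun z hz => h2 z hz.1 hz.2⟩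
        · rintro ⟨h1, h2⟩
          exact ⟨fun z a hb => h1 z ⟨a, hb⟩, fun z a hb => h2 z ⟨a, hb⟩⟩
      rw [heq]
      exact ((hfinroots.subset fun z hz => hz.1).isOpen_biInter fun _ _ => isOpen_Iio).inter
        ((hfinroots.subset fun z hz => hz.1).isOpen_biInter fun _ _ => isOpen_Ioi)
    exact hopen.mem_nhds hrJ
  · intro y hy hy0
    rw [hJ] at hy0
    obtain ⟨hupJ, hdownJ⟩ := hy0
    refine field_conv (fun w => σ * p.eval w)
      (continuous_const.mul p.continuous_aeval) r (by show σ * p.eval r = 0; rw [hroot, mul_zero])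
      (hfinroots.subset fun z hz => (hgzero z).1 hz) ?_ ?_ y hy ?_ ?_
    · intro w hw hz
      exact Splus hσ w hw fun z h1 h2 => hz z ((hgzero z).2 h1) h2
    · intro w hw hz
      exact Sminus hroot hsimple hσ w hw fun z h1 h2 => hz z ((hgzero z).2 h1) h2
    · intro z hz1 hz2
      exact hupJ z ((hgzero z).1 hz1) hz2
    · intro z hz1 hz2
      exact hdownJ z ((hgzero z).1 hz1) hz2
end

section
/- The PODE dy/dt = −z₁(x−z₂), dz₁/dt = y(x−z₂), dz₂/dt = x−z₂ with constant x and initial conditions y(0)=1, z₁(0)=0, z₂(0)=0 has the explicit solution y(t) = cos(z₂(t)), z₁(t) = sin(z₂(t)), z₂(t) = x(1−e^{−t}); in particular y(t) → cos(x) as t → ∞. -/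
open Filter

theorem stmt_9 (x : ℝ) (y z₁ z₂ : ℝ → ℝ)
    (hy : ∀ t, HasDerivAt y (-(z₁ t) * (x - z₂ t)) t)
    (hz₁ : ∀ t, HasDerivAt z₁ (y t * (x - z₂ t)) t)
    (hz₂ : ∀ t, HasDerivAt z₂ (x - z₂ t) t)
    (hy0 : y 0 = 1) (hz₁0 : z₁ 0 = 0) (hz₂0 : z₂ 0 = 0) :
    (∀ t, y t = Real.cos (z₂ t) ∧ z₁ t = Real.sin (z₂ t) ∧
      z₂ t = x * (1 - Real.exp (-t))) ∧
    Tendsto y atTop (nhds (Real.cos x)) := by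
  -- z₂ explicit
  have hz₂eq : ∀ t, z₂ t = x * (1 - Real.exp (-t)) := by
    set g : ℝ → ℝ := fun t => (z₂ t - x) * Real.exp t with hg
    have hg' : ∀ t, HasDerivAt g 0 t := by
      intro t
      have := ((hz₂ t).sub_const x).mul (Real.hasDerivAt_exp t)
      refine this.congr_deriv ?_
      ring
    have hconst : ∀ t, g t = g 0 := by
      intro t
      exact is_const_of_deriv_eq_zero (fun s => (hg' s).differentiableAt)
        (fun s => (hg' s).deriv) t 0
    intro t
    have h := hconst t
    simp only [hg, hz₂0, Real.exp_zero] at h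
    have hexp : Real.exp t ≠ 0 := Real.exp_ne_zero t
    have : z₂ t - x = -x * Real.exp (-t) := by
      rw [Real.exp_neg]
      field_simp
      linarith
    have := this
    rw [Real.exp_neg] at this ⊢
    nlinarith [this]
  -- energy
  have hE : ∀ t, y t = Real.cos (z₂ t) ∧ z₁ t = Real.sin (z₂ t) := by
    set E : ℝ → ℝ := fun t => (y t - Real.cos (z₂ t))^2 + (z₁ t - Real.sin (z₂ t))^2 with hEdef
    have hE' : ∀ t, HasDerivAt E 0 t := by
      intro t
      have hcos : HasDerivAt (fun t => Real.cos (z₂ t)) (-Real.sin (z₂ t) * (x - z₂ t)) t :=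
        (Real.hasDerivAt_cos (z₂ t)).comp t (hz₂ t)
      have hsin : HasDerivAt (fun t => Real.sin (z₂ t)) (Real.cos (z₂ t) * (x - z₂ t)) t :=
        (Real.hasDerivAt_sin (z₂ t)).comp t (hz₂ t)
      have h1 := ((hy t).sub hcos).pow 2
      have h2 := ((hz₁ t).sub hsin).pow 2
      have := h1.add h2
      refine this.congr_deriv ?_
      simp only [Pi.sub_apply]
      ring
    have hconst : ∀ t, E t = E 0 := by
      intro t
      exact is_const_of_deriv_eq_zero (fun s => (hE' s).differentiableAt)
        (fun s => (hE' s).deriv) t 0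
    intro t
    have h := hconst t
    simp only [hEdef, hy0, hz₁0, hz₂0, Real.cos_zero, Real.sin_zero] at h
    norm_num at h
    constructor
    · nlinarith [sq_nonneg (y t - Real.cos (z₂ t)), sq_nonneg (z₁ t - Real.sin (z₂ t))]
    · nlinarith [sq_nonneg (y t - Real.cos (z₂ t)), sq_nonneg (z₁ t - Real.sin (z₂ t))]
  refine ⟨fun t => ⟨(hE t).1, (hE t).2, hz₂eq t⟩, ?_⟩
  have hyform : y = fun t => Real.cos (x * (1 - Real.exp (-t))) := by
    funext t
    rw [(hE t).1, hz₂eq t]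
  rw [hyform]
  have hlim : Tendsto (fun t : ℝ => x * (1 - Real.exp (-t))) atTop (nhds x) := by
    have h1 : Tendsto (fun t : ℝ => Real.exp (-t)) atTop (nhds 0) := by
      have := Real.tendsto_exp_atBot
      exact this.comp tendsto_neg_atTop_atBot
    have h2 : Tendsto (fun t : ℝ => x * (1 - Real.exp (-t))) atTop (nhds (x * (1 - 0))) :=
      (tendsto_const_nhds.sub h1).const_mul x
    simpa using h2
  exact (Real.continuous_cos.tendsto x).comp hlim
end

section
/- Let f be differentiable with algebraic relation P(x, f(x)) = 0, let y satisfy dy/dt = ±α·P(x(t), y) with x(t) differentiable, and define ε(t) = y(t) − f(x(t)) and Q by ±P(x, f(x)+ε) = −ε·Q(x, ε). Then dε/dt = −ε·α·Q(x(t), ε) − f'(x(t))·x'(t). In particular if |x'(t)| ≤ k then −ε·α·Q(x,ε) − k·|f'(x)| ≤ dε/dt ≤ −ε·α·Q(x,ε) + k·|f'(x)|. -/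
theorem stmt_14 (P Q : ℝ → ℝ → ℝ) (f x y : ℝ → ℝ) (α σ k : ℝ)
    (hσ : σ = 1 ∨ σ = -1)
    (hf : Differentiable ℝ f) (hx : Differentiable ℝ x)
    (hrel : ∀ u, P u (f u) = 0)
    (hQ : ∀ u ε, σ * P u (f u + ε) = -(ε * Q u ε))
    (hy : ∀ t, HasDerivAt y (σ * α * P (x t) (y t)) t)
    (ε : ℝ → ℝ) (hε : ε = fun t => y t - f (x t)) (t : ℝ) :
    HasDerivAt ε (-(ε t) * α * Q (x t) (ε t) - deriv f (x t) * deriv x t) t ∧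
    (|deriv x t| ≤ k →
      -(ε t) * α * Q (x t) (ε t) - k * |deriv f (x t)| ≤
        -(ε t) * α * Q (x t) (ε t) - deriv f (x t) * deriv x t ∧
      -(ε t) * α * Q (x t) (ε t) - deriv f (x t) * deriv x t ≤
        -(ε t) * α * Q (x t) (ε t) + k * |deriv f (x t)|) := by
  constructor
  · have hfx : HasDerivAt (fun t => f (x t)) (deriv f (x t) * deriv x t) t :=
      ((hf (x t)).hasDerivAt.comp t (hx t).hasDerivAt)
    have h := (hy t).sub hfx
    have key : σ * α * P (x t) (y t) = -(ε t) * α * Q (x t) (ε t) := by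
      have hy' : y t = f (x t) + ε t := by simp [hε]
      have := hQ (x t) (ε t)
      rw [hy']
      calc σ * α * P (x t) (f (x t) + ε t)
          = α * (σ * P (x t) (f (x t) + ε t)) := by ring
        _ = α * (-(ε t * Q (x t) (ε t))) := by rw [this]
        _ = -(ε t) * α * Q (x t) (ε t) := by ring
    rw [key] at h
    subst hε
    exact h
  · intro hk
    have habs : |deriv f (x t) * deriv x t| ≤ k * |deriv f (x t)| := by
      rw [abs_mul, mul_comm]
      exact mul_le_mul_of_nonneg_right hk (abs_nonneg _)
    have h1 := neg_abs_le (deriv f (x t) * deriv x t)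
    have h2 := le_abs_self (deriv f (x t) * deriv x t)
    constructor <;> nlinarith
end

section
/- Suppose ε : ℝ → ℝ is differentiable and satisfies, for all t, the implication (ε(t) = p ⇒ ε'(t) < 0) and (ε(t) = −p ⇒ ε'(t) > 0) for some p > 0. If |ε(t₁)| ≤ p then |ε(t)| ≤ p for all t ≥ t₁. -/
open Filter Set Topology

/-- If the derivative at `c` is negative, then just after `c` the value drops below `f c`. -/
lemma eventually_lt_of_deriv_neg' (f : ℝ → ℝ) (c : ℝ) (hf : DifferentiableAt ℝ f c)
    (h : deriv f c < 0) : ∀ᶠ s in 𝓝[>] c, f s < f c := by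
  have hslope := hasDerivAt_iff_tendsto_slope.1 hf.hasDerivAt
  have hslope' : Tendsto (slope f c) (𝓝[>] c) (𝓝 (deriv f c)) :=
    hslope.mono_left (nhdsWithin_mono c (by intro x hx; exact ne_of_gt hx))
  have hev : ∀ᶠ s in 𝓝[>] c, slope f c s < 0 :=
    hslope' (Iio_mem_nhds h)
  filter_upwards [hev, self_mem_nhdsWithin] with s hs hs'
  have hsc : (0:ℝ) < s - c := sub_pos.2 hs'
  have : (f s - f c) / (s - c) < 0 := by simpa [slope_def_field, div_eq_inv_mul] using hs
  have h2 := mul_neg_of_neg_of_pos this hsc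
  rw [div_mul_cancel₀ _ hsc.ne'] at h2
  linarith

lemma eventually_gt_of_deriv_pos' (f : ℝ → ℝ) (c : ℝ) (hf : DifferentiableAt ℝ f c)
    (h : 0 < deriv f c) : ∀ᶠ s in 𝓝[>] c, f c < f s := by
  have := eventually_lt_of_deriv_neg' (fun x => -f x) c (hf.neg) (by
    rw [deriv.fun_neg]; linarith)
  filter_upwards [this] with s hs
  simpa using hs

theorem stmt_15 (ε : ℝ → ℝ) (hd : Differentiable ℝ ε) (p : ℝ) (hp : 0 < p)
    (hup : ∀ t, ε t = p → deriv ε t < 0)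
    (hdown : ∀ t, ε t = -p → deriv ε t > 0)
    (t₁ : ℝ) (h1 : |ε t₁| ≤ p) :
    ∀ t ≥ t₁, |ε t| ≤ p := by
  intro t ht
  by_contra hcon
  push_neg at hcon
  set S : Set ℝ := {s | s ∈ Icc t₁ t ∧ |ε s| ≤ p} with hS
  have hne : S.Nonempty := ⟨t₁, ⟨le_refl _, ht⟩, h1⟩
  have hbdd : BddAbove S := ⟨t, fun s hs => hs.1.2⟩
  set c := sSup S with hc
  have hcS : c ∈ S := by
    have hclosed : IsClosed S := by
      have : S = Icc t₁ t ∩ (fun s => |ε s|) ⁻¹' Iic p := rfl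
      rw [this]
      exact isClosed_Icc.inter (IsClosed.preimage (continuous_abs.comp hd.continuous) isClosed_Iic)
    exact hclosed.csSup_mem hne hbdd
  have hct : c ≤ t := hcS.1.2
  have hclt : c < t := lt_of_le_of_ne hct (fun hEq => absurd (hEq ▸ hcS.2) (not_le.2 hcon))
  -- eventually just after c, ε s < p
  have hub : ∀ᶠ s in 𝓝[>] c, ε s < p := by
    rcases lt_or_eq_of_le (le_of_abs_le hcS.2) with h | h
    · have : ∀ᶠ s in 𝓝 c, ε s < p :=
        (hd.continuous.continuousAt).eventually_lt continuousAt_const h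
      exact this.filter_mono nhdsWithin_le_nhds
    · have := eventually_lt_of_deriv_neg' ε c (hd c) (hup c h)
      filter_upwards [this] with s hs; rwa [h] at hs
  have hlb : ∀ᶠ s in 𝓝[>] c, -p < ε s := by
    rcases lt_or_eq_of_le (neg_le_of_abs_le hcS.2) with h | h
    · have : ∀ᶠ s in 𝓝 c, -p < ε s :=
        continuousAt_const.eventually_lt (hd.continuous.continuousAt) h
      exact this.filter_mono nhdsWithin_le_nhds
    · have := eventually_gt_of_deriv_pos' ε c (hd c) (hdown c h.symm)
      filter_upwards [this] with s hs; rwa [h]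
  have hlt : ∀ᶠ s in 𝓝[>] c, s < t := by
    have : Iio t ∈ 𝓝 c := Iio_mem_nhds hclt
    exact eventually_iff_exists_mem.2 ⟨Iio t, nhdsWithin_le_nhds this, fun s hs => hs⟩
  obtain ⟨s, ⟨⟨hs1, hs2⟩, hs3⟩, hs4⟩ :=
    (((hub.and hlb).and hlt).and self_mem_nhdsWithin).exists
  -- obtained s : data structure is nested, fix below
  have hsmem : s ∈ S := by
    refine ⟨⟨le_trans hcS.1.1 (le_of_lt hs4), le_of_lt hs3⟩, abs_le.2 ⟨le_of_lt hs2, le_of_lt hs1⟩⟩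
  exact absurd (le_csSup hbdd hsmem) (not_le.2 hs4)
end

section
/- For the Hill function f(x) = x/(1+x) stabilized directly by dy/dt = α(x(t) − y − x(t)·y) with x k-Lipschitz, differentiable and nonnegative, the error ε = y − f(x) satisfies: whenever ε(t)·dε/dt ≥ 0, |ε(t)| ≤ (k/α)·1/(1+x(t))³. -/
theorem stmt_18 (α k : ℝ) (hα : 0 < α) (hk : 0 ≤ k) (x y : ℝ → ℝ)
    (hlip : ∀ s t, |x s - x t| ≤ k * |s - t|)
    (hxd : Differentiable ℝ x)
    (hxpos : ∀ t, 0 ≤ x t)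
    (hy : ∀ t, HasDerivAt y (α * (x t - y t - x t * y t)) t)
    (ε : ℝ → ℝ) (hε : ε = fun t => y t - x t / (1 + x t)) :
    ∀ t, ε t * deriv ε t ≥ 0 →
      |ε t| ≤ k / α * (1 / (1 + x t) ^ 3) := by
  intro t ht
  have hu : (0:ℝ) < 1 + x t := by have := hxpos t; linarith
  have hne : (1 + x t) ≠ 0 := ne_of_gt hu
  have hxd' : HasDerivAt x (deriv x t) t := (hxd t).hasDerivAt
  set d := deriv x t with hd
  -- |d| ≤ k
  have hdk : |d| ≤ k := by
    have h1 : Filter.Tendsto (slope x t) (nhdsWithin t {t}ᶜ) (nhds d) :=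
      hasDerivAt_iff_tendsto_slope.mp hxd'
    have h2 : ∀ᶠ s in nhdsWithin t {t}ᶜ, |slope x t s| ≤ k := by
      filter_upwards [self_mem_nhdsWithin] with s hs
      have hst : s - t ≠ 0 := sub_ne_zero.mpr hs
      have habs : (0:ℝ) < |s - t| := abs_pos.mpr hst
      rw [slope_def_field, abs_div, div_le_iff₀ habs]
      exact hlip s t
    exact le_of_tendsto h1.abs h2
  -- derivative of ε
  have hq : HasDerivAt (fun s => x s / (1 + x s))
      ((d * (1 + x t) - x t * (0 + d)) / (1 + x t) ^ 2) t :=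
    hxd'.div ((hasDerivAt_const t (1:ℝ)).add hxd') hne
  have hεd : HasDerivAt ε (α * (x t - y t - x t * y t) - d / (1 + x t) ^ 2) t := by
    rw [hε]
    have h := (hy t).sub hq
    exact h.congr_deriv (by ring)
  have hde : deriv ε t = α * (x t - y t - x t * y t) - d / (1 + x t) ^ 2 := hεd.deriv
  -- rewrite the drift term
  have hkey : x t - y t - x t * y t = -((1 + x t) * ε t) := by
    rw [hε]; field_simp; ring
  rw [hde, hkey] at ht
  set e := ε t with he
  set u := 1 + x t with hudef
  obtain ⟨hd1, hd2⟩ := abs_le.mp hdk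
  have hu3 : (0:ℝ) < α * u ^ 3 := by positivity
  have hu2 : (0:ℝ) < u ^ 2 := by positivity
  -- main inequality: α u e² + e d / u² ≤ 0
  have hmain : α * u * e ^ 2 + e * d / u ^ 2 ≤ 0 := by
    have hexp : e * (α * -(u * e) - d / u ^ 2) = -(α * u * e ^ 2 + e * d / u ^ 2) := by ring
    linarith [hexp ▸ ht]
  have hmain' : α * u ^ 3 * e ^ 2 + e * d ≤ 0 := by
    have := mul_le_mul_of_nonneg_left hmain (le_of_lt hu2)
    have heq : u ^ 2 * (α * u * e ^ 2 + e * d / u ^ 2) = α * u ^ 3 * e ^ 2 + e * d := by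
      field_simp
    linarith [heq ▸ this]
  rw [show k / α * (1 / u ^ 3) = k / (α * u ^ 3) by field_simp]
  rw [abs_le]
  constructor
  · rw [neg_le, le_div_iff₀ hu3]
    rcases lt_trichotomy e 0 with h0 | h0 | h0
    · nlinarith [hmain', mul_le_mul_of_nonneg_left hd2 (by linarith : (0:ℝ) ≤ -e), h0]
    · rw [h0]; simpa using hk
    · nlinarith [mul_pos hu3 h0]
  · rw [le_div_iff₀ hu3]
    rcases lt_trichotomy e 0 with h0 | h0 | h0
    · nlinarith [mul_pos hu3 (by linarith : (0:ℝ) < -e)]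
    · rw [h0]; simpa using hk
    · nlinarith [hmain', mul_le_mul_of_nonneg_left hd1 h0.le, h0]
end
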